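/- The Lie algebra generated by the six derivations V, W, H, zV, zW, zH on the Danielewski surface contains -yH, namely -yH = [zH, V] - [H, zV], and by induction contains (n+1)·z·y^{n+1}·V = [yH, z yⁿ V] for all n ≥ 0. -/

import Mathlib

open Polynomial

set_option synthInstance.maxHeartbeats 1000000
set_option maxHeartbeats 1000000

noncomputable section

/-- Coordinate ring of the Danielewski surface `x y = p(z)`. -/
abbrev DS (p : Polynomial ℂ) : Type :=
  MvPolynomial (Fin 3) ℂ ⧸
    Ideal.span ({MvPolynomial.X 0 * MvPolynomial.X 1 -
      Polynomial.aeval (MvPolynomial.X 2) p} : Set (MvPolynomial (Fin 3) ℂ))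

def dsX (p : Polynomial ℂ) : DS p := Ideal.Quotient.mk _ (MvPolynomial.X 0)
def dsY (p : Polynomial ℂ) : DS p := Ideal.Quotient.mk _ (MvPolynomial.X 1)
def dsZ (p : Polynomial ℂ) : DS p := Ideal.Quotient.mk _ (MvPolynomial.X 2)

lemma ds_adjoin_top (p : Polynomial ℂ) :
    Algebra.adjoin ℂ ({dsX p, dsY p, dsZ p} : Set (DS p)) = ⊤ := by
  rw [eq_top_iff]
  rintro a -
  obtain ⟨q, rfl⟩ := Ideal.Quotient.mk_surjective a
  induction q using MvPolynomial.induction_on with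
  | C r =>
      have : (Ideal.Quotient.mk _ (MvPolynomial.C r : MvPolynomial (Fin 3) ℂ) : DS p)
          = algebraMap ℂ (DS p) r := rfl
      rw [this]
      exact Subalgebra.algebraMap_mem _ r
  | add q₁ q₂ h₁ h₂ =>
      rw [map_add]; exact add_mem h₁ h₂
  | mul_X q i h =>
      rw [map_mul]
      refine mul_mem h ?_
      refine Algebra.subset_adjoin ?_
      fin_cases i
      · exact Or.inl rfl
      · exact Or.inr (Or.inl rfl)
      · exact Or.inr (Or.inr rfl)

/-- the Lie algebra generated by `V, W, H, zV, zW, zH` contains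
`-yH = [zH,V] - [H,zV]` and `(n+1)·z·y^(n+1)·V = [yH, z yⁿ V]` for all `n ≥ 0`. -/
theorem lie_span_six_generators (p : Polynomial ℂ)
    (V W H : Derivation ℂ (DS p) (DS p))
    (hVx : V (dsX p) = Polynomial.aeval (dsZ p) (derivative p))
    (hVy : V (dsY p) = 0) (hVz : V (dsZ p) = dsY p)
    (hWx : W (dsX p) = 0)
    (hWy : W (dsY p) = Polynomial.aeval (dsZ p) (derivative p))
    (hWz : W (dsZ p) = dsX p)
    (hHx : H (dsX p) = -dsX p) (hHy : H (dsY p) = dsY p)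
    (hHz : H (dsZ p) = 0) :
    (⁅dsZ p • H, V⁆ - ⁅H, dsZ p • V⁆ = -(dsY p • H)) ∧
    (∀ n : ℕ, ⁅dsY p • H, (dsZ p * dsY p ^ n) • V⁆ =
      (((n : ℂ) + 1) • (dsZ p * dsY p ^ (n+1))) • V) ∧
    (-(dsY p • H) ∈
      LieSubalgebra.lieSpan ℂ (Derivation ℂ (DS p) (DS p))
        {V, W, H, dsZ p • V, dsZ p • W, dsZ p • H}) ∧
    (∀ n : ℕ, (((n : ℂ) + 1) • (dsZ p * dsY p ^ (n+1))) • V ∈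
      LieSubalgebra.lieSpan ℂ (Derivation ℂ (DS p) (DS p))
        {V, W, H, dsZ p • V, dsZ p • W, dsZ p • H}) := by
  -- `[H, V] = V`.
  have hHaeval : ∀ q : Polynomial ℂ, H (Polynomial.aeval (dsZ p) q) = 0 := by
    intro q
    rw [Derivation.map_aeval, hHz, smul_zero]
  have hHV : ⁅H, V⁆ = V := by
    apply Derivation.ext_of_adjoin_eq_top _ (ds_adjoin_top p)
    rintro a (rfl | rfl | rfl)
    · simp [Derivation.commutator_apply, hVx, hHx, hHaeval]
    · simp [Derivation.commutator_apply, hVy, hHy]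
    · simp [Derivation.commutator_apply, hVz, hHz, hHy]
  have hHVa : ∀ a : DS p, H (V a) - V (H a) = V a := by
    intro a
    have := congrArg (fun D : Derivation ℂ (DS p) (DS p) => D a) hHV
    simpa [Derivation.commutator_apply] using this
  -- H (z * y^n) = n • (z * y^n)
  have hHzy : ∀ n : ℕ, H (dsZ p * dsY p ^ n) = (n : ℂ) • (dsZ p * dsY p ^ n) := by
    intro n
    induction n with
    | zero => simp [hHz]
    | succ n ih =>
        have hmul : dsZ p * dsY p ^ (n + 1) = (dsZ p * dsY p ^ n) * dsY p := by ring
        rw [hmul, Derivation.leibniz, ih, hHy, smul_eq_mul, smul_eq_mul]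
        simp only [Nat.cast_smul_eq_nsmul, nsmul_eq_mul]
        push_cast
        ring
  -- statement 1
  have h1 : ⁅dsZ p • H, V⁆ - ⁅H, dsZ p • V⁆ = -(dsY p • H) := by
    ext a
    simp only [Derivation.sub_apply, Derivation.commutator_apply, Derivation.smul_apply,
      Derivation.neg_apply, Derivation.leibniz, hHz, hVz, smul_eq_mul]
    ring
  -- statement 2
  have h2 : ∀ n : ℕ, ⁅dsY p • H, (dsZ p * dsY p ^ n) • V⁆ =
      (((n : ℂ) + 1) • (dsZ p * dsY p ^ (n+1))) • V := by
    intro n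
    ext a
    have key := hHVa a
    have e : H (dsZ p * dsY p ^ n * V a)
        = dsZ p * dsY p ^ n * H (V a) + V a * ((n : ℂ) • (dsZ p * dsY p ^ n)) := by
      rw [Derivation.leibniz, hHzy n, smul_eq_mul, smul_eq_mul]
    have e2 : V (dsY p * H a) = dsY p * V (H a) := by
      rw [Derivation.leibniz, hVy, smul_eq_mul, smul_eq_mul, mul_zero, add_zero]
    simp only [Derivation.commutator_apply, Derivation.smul_apply, smul_eq_mul, e, e2]
    have hc : ((n : ℂ) + 1) = ((n + 1 : ℕ) : ℂ) := by push_cast; ring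
    rw [hc]
    simp only [Nat.cast_smul_eq_nsmul, nsmul_eq_mul]
    push_cast
    linear_combination (dsZ p * dsY p ^ (n+1)) * key
  -- membership
  set S := LieSubalgebra.lieSpan ℂ (Derivation ℂ (DS p) (DS p))
      {V, W, H, dsZ p • V, dsZ p • W, dsZ p • H} with hS
  have hVm : V ∈ S := LieSubalgebra.subset_lieSpan (by simp)
  have hHm : H ∈ S := LieSubalgebra.subset_lieSpan (by simp only [Set.mem_insert_iff, Set.mem_singleton_iff, eq_self_iff_true, true_or, or_true])
  have hzVm : dsZ p • V ∈ S := LieSubalgebra.subset_lieSpan (by simp only [Set.mem_insert_iff, Set.mem_singleton_iff, eq_self_iff_true, true_or, or_true])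
  have hzHm : dsZ p • H ∈ S := LieSubalgebra.subset_lieSpan (by simp only [Set.mem_insert_iff, Set.mem_singleton_iff, eq_self_iff_true, true_or, or_true])
  have h3 : -(dsY p • H) ∈ S := by
    rw [← h1]
    exact sub_mem (LieSubalgebra.lie_mem _ hzHm hVm) (LieSubalgebra.lie_mem _ hHm hzVm)
  have hyHm : dsY p • H ∈ S := neg_mem_iff.mp h3
  have h4 : ∀ n : ℕ, (((n : ℂ) + 1) • (dsZ p * dsY p ^ (n+1))) • V ∈ S := by
    intro n
    induction n with
    | zero =>
        rw [← h2 0]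
        have : (dsZ p * dsY p ^ 0) • V = dsZ p • V := by rw [pow_zero, mul_one]
        rw [this]
        exact LieSubalgebra.lie_mem _ hyHm hzVm
    | succ n ih =>
        have hne : ((n : ℂ) + 1) ≠ 0 := Nat.cast_add_one_ne_zero n
        have h5 : (dsZ p * dsY p ^ (n+1)) • V ∈ S := by
          have := S.smul_mem (((n : ℂ) + 1)⁻¹) ih
          rwa [smul_assoc, smul_smul, inv_mul_cancel₀ hne, one_smul] at this
        have := LieSubalgebra.lie_mem S hyHm h5
        rw [h2 (n+1)] at this
        convert this using 3
  exact ⟨h1, h2, h3, h4⟩
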